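/- Let f and g be polynomials in ℂ[s,t] satisfying 4f³ + 27g² = 0. Then there exists a polynomial h ∈ ℂ[s,t] such that f = −3h² and g = 2h³. -/

import Mathlib

open MvPolynomial

lemma cube_eq_sq {R : Type*} [CommRing R] [IsDomain R] [UniqueFactorizationMonoid R]
    {a b : R} (hab : a ^ 3 = b ^ 2) : ∃ c : R, a = c ^ 2 ∧ b = c ^ 3 := by
  classical
  rcases eq_or_ne a 0 with rfl | ha
  · refine ⟨0, by simp, ?_⟩
    have : b ^ 2 = 0 := by simpa using hab.symm
    simpa using pow_eq_zero_iff (n := 2) (by norm_num) |>.mp this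
  letI := UniqueFactorizationMonoid.toGCDMonoid R
  -- first show a ∣ b
  have hdvd : a ∣ b := by
    obtain ⟨a', b', ea, eb, hu⟩ := extract_gcd a b
    set d := gcd a b with hd
    have hd0 : d ≠ 0 := by
      intro h0
      exact ha (by rw [ea, h0, zero_mul])
    have key : d * a' ^ 3 = b' ^ 2 := by
      have h2 : d ^ 2 * (d * a' ^ 3) = d ^ 2 * b' ^ 2 := by
        have h' := hab
        rw [ea, eb] at h'
        linear_combination h'
      exact mul_left_cancel₀ (pow_ne_zero 2 hd0) h2
    have ha'u : IsUnit a' := by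
      have hrel : IsRelPrime a' b' := gcd_isUnit_iff_isRelPrime.mp hu
      have hrel2 : IsRelPrime a' (b' ^ 2) := hrel.pow_right
      exact hrel2 dvd_rfl ⟨d * a' ^ 2, by rw [← key]; ring⟩
    obtain ⟨u, hu'⟩ := ha'u
    have : a ∣ d := ⟨(↑u⁻¹ : Rˣ), by rw [ea, ← hu']; simp⟩
    exact this.trans ⟨b', eb⟩
  obtain ⟨c, hc⟩ := hdvd
  have ha2 : a = c ^ 2 := by
    have h2 : a ^ 2 * a = a ^ 2 * c ^ 2 := by
      rw [← pow_succ, hab, hc]; ring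
    exact mul_left_cancel₀ (pow_ne_zero 2 ha) h2
  exact ⟨c, ha2, by rw [hc, ha2]; ring⟩

theorem stmt_0 (f g : MvPolynomial (Fin 2) ℂ)
    (h : 4 * f ^ 3 + 27 * g ^ 2 = 0) :
    ∃ h' : MvPolynomial (Fin 2) ℂ, f = -3 * h' ^ 2 ∧ g = 2 * h' ^ 3 := by
  have hab : (-12 * f) ^ 3 = (108 * g) ^ 2 := by
    linear_combination (-432 : MvPolynomial (Fin 2) ℂ) * h
  obtain ⟨c, hc1, hc2⟩ := cube_eq_sq hab
  have h36 : (36 : MvPolynomial (Fin 2) ℂ) = C (36 : ℂ) := (map_ofNat C _).symm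
  have h216 : (216 : MvPolynomial (Fin 2) ℂ) = C (216 : ℂ) := (map_ofNat C _).symm
  have hx2 : (C (1/6 : ℂ) : MvPolynomial (Fin 2) ℂ) ^ 2 = C (1/36 : ℂ) := by
    rw [← map_pow]; norm_num
  have hx3 : (C (1/6 : ℂ) : MvPolynomial (Fin 2) ℂ) ^ 3 = C (1/216 : ℂ) := by
    rw [← map_pow]; norm_num
  have hC : (C (1/36 : ℂ) : MvPolynomial (Fin 2) ℂ) * 36 = 1 := by
    rw [h36, ← map_mul]; norm_num
  have hC2 : (C (1/216 : ℂ) : MvPolynomial (Fin 2) ℂ) * 216 = 1 := by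
    rw [h216, ← map_mul]; norm_num
  refine ⟨C (1/6 : ℂ) * c, ?_, ?_⟩
  · linear_combination (-3 * C (1/36 : ℂ) : MvPolynomial (Fin 2) ℂ) * hc1 +
      (-f) * hC + (3 * c ^ 2) * hx2
  · linear_combination (-2 * c ^ 3) * hx3 + (2 * C (1/216 : ℂ) : MvPolynomial (Fin 2) ℂ) * hc2 +
      (-g) * hC2
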